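/- Let X_1, …, X_n be independent random vectors taking values in {0,1}^d, and set ρ = max_{j∈[d]} (1/n) Σ_{i=1}^n E[X_{i,j}]. Then P( max_{j∈[d]} (1/n) Σ_{i=1}^n X_{i,j} ≥ 3 ln(1+d)/n + 7ρ ) ≤ 2 e^{−nρ}. -/

import Mathlib

open MeasureTheory ProbabilityTheory

/-- Counting lemma for boolean random variables (Lemma B.1): for independent
`{0,1}^d`-valued `X_1,…,X_n` and `ρ = max_j (1/n) Σ_i E X_{i,j}`,
`P(max_j (1/n) Σ_i X_{i,j} ≥ 3 ln(1+d)/n + 7ρ) ≤ 2 e^{−nρ}`. -/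
theorem stmt_19 {Ω : Type*} [MeasurableSpace Ω] (μ : Measure Ω) [IsProbabilityMeasure μ]
    (n d : ℕ) (hn : 0 < n) (hd : 0 < d)
    (X : Fin n → Ω → Fin d → ℝ)
    (hmeas : ∀ i, Measurable (X i))
    (hbool : ∀ i ω j, X i ω j = 0 ∨ X i ω j = 1)
    (hindep : iIndepFun X μ)
    (ρ : ℝ)
    (hρ : ρ = ⨆ j : Fin d, (1 / (n : ℝ)) * ∑ i, ∫ ω, X i ω j ∂μ) :
    μ {ω | 3 * Real.log (1 + d) / n + 7 * ρ
        ≤ ⨆ j : Fin d, (1 / (n : ℝ)) * ∑ i, X i ω j}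
      ≤ ENNReal.ofReal (2 * Real.exp (-(n * ρ))) := by
  haveI : Nonempty (Fin d) := ⟨⟨0, hd⟩⟩
  have hn' : (0:ℝ) < n := by exact_mod_cast hn
  set L : ℝ := Real.log (1 + d) with hL
  set M : ℝ := (n:ℝ) * ρ with hM
  set t : ℝ := 3 * L + 7 * M with ht
  set p : Fin n → Fin d → ℝ := fun i j => ∫ ω, X i ω j ∂μ with hpdef
  set S : Fin d → Ω → ℝ := fun j ω => ∑ i, X i ω j with hS
  have hXmeas : ∀ i j, Measurable (fun ω => X i ω j) :=
    fun i j => (measurable_pi_apply j).comp (hmeas i)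
  have hX01 : ∀ i ω j, 0 ≤ X i ω j ∧ X i ω j ≤ 1 := by
    intro i ω j; rcases hbool i ω j with h | h <;> simp [h]
  have hXint : ∀ i j, Integrable (fun ω => X i ω j) μ := fun i j =>
    (integrable_const (1:ℝ)).mono' (hXmeas i j).aestronglyMeasurable
      (Filter.Eventually.of_forall fun ω => by
        rw [Real.norm_eq_abs, abs_of_nonneg (hX01 i ω j).1]; exact (hX01 i ω j).2)
  have hp0 : ∀ i j, 0 ≤ p i j := fun i j =>
    integral_nonneg fun ω => (hX01 i ω j).1
  have hρj : ∀ j, (1 / (n:ℝ)) * ∑ i, p i j ≤ ρ := by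
    intro j; rw [hρ]
    exact le_ciSup (f := fun j : Fin d => (1 / (n:ℝ)) * ∑ i, ∫ ω, X i ω j ∂μ) (Finite.bddAbove_range _) j
  have hρ0 : 0 ≤ ρ :=
    le_trans (mul_nonneg (by positivity) (Finset.sum_nonneg fun i _ => hp0 i ⟨0, hd⟩))
      (hρj ⟨0, hd⟩)
  have hM0 : 0 ≤ M := mul_nonneg (Nat.cast_nonneg n) hρ0
  have hsumpj : ∀ j, ∑ i, p i j ≤ M := by
    intro j
    have := mul_le_mul_of_nonneg_left (hρj j) hn'.le
    rw [← mul_assoc, mul_one_div, div_self hn'.ne', one_mul] at this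
    exact this
  -- inclusion into union of per-coordinate events
  have hsub : {ω | 3 * Real.log (1 + d) / n + 7 * ρ
        ≤ ⨆ j : Fin d, (1 / (n : ℝ)) * ∑ i, X i ω j}
      ⊆ ⋃ j : Fin d, {ω | t ≤ S j ω} := by
    intro ω hω
    obtain ⟨j, hj⟩ := exists_eq_ciSup_of_finite
      (f := fun j : Fin d => (1 / (n:ℝ)) * ∑ i, X i ω j)
    refine Set.mem_iUnion.2 ⟨j, ?_⟩
    have h1 : 3 * Real.log (1 + d) / n + 7 * ρ ≤ (1 / (n:ℝ)) * S j ω := by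
      rw [hj]; exact hω
    have h2 := mul_le_mul_of_nonneg_left h1 hn'.le
    have e1 : (n:ℝ) * (3 * Real.log (1 + d) / n + 7 * ρ) = t := by
      field_simp [ht, hL, hM]; ring
    have e2 : (n:ℝ) * ((1 / (n:ℝ)) * S j ω) = S j ω := by
      field_simp
    rw [e1, e2] at h2
    exact h2
  -- per-coordinate independence
  have hind_j : ∀ j : Fin d, iIndepFun
      (fun i ω => X i ω j) μ := by
    intro j
    exact hindep.comp (fun _ (v : Fin d → ℝ) => v j) (fun _ => measurable_pi_apply j)
  -- per-variable mgf bound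
  have hmgf_i : ∀ i j, mgf (fun ω => X i ω j) μ 1 ≤ Real.exp ((Real.exp 1 - 1) * p i j) := by
    intro i j
    have hpt : ∀ ω, Real.exp (1 * X i ω j) = 1 + (Real.exp 1 - 1) * X i ω j := by
      intro ω; rcases hbool i ω j with h | h <;> simp [h]
    have : mgf (fun ω => X i ω j) μ 1 = 1 + (Real.exp 1 - 1) * p i j := by
      rw [mgf]
      simp only [hpt]
      rw [integral_add (integrable_const 1) ((hXint i j).const_mul _),
        integral_const, integral_const_mul]
      simp [hpdef]
    rw [this]
    have := Real.add_one_le_exp ((Real.exp 1 - 1) * p i j)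
    linarith
  -- integrability of exp(S j)
  have hSint : ∀ j, Integrable (fun ω => Real.exp (1 * S j ω)) μ := by
    intro j
    refine (integrable_const (Real.exp n)).mono'
      ((Finset.measurable_sum Finset.univ fun i _ => hXmeas i j).const_mul (1:ℝ)).exp.aestronglyMeasurable
      (Filter.Eventually.of_forall fun ω => ?_)
    rw [Real.norm_eq_abs, abs_of_pos (Real.exp_pos _), Real.exp_le_exp, one_mul]
    calc S j ω ≤ ∑ _i : Fin n, (1:ℝ) := Finset.sum_le_sum fun i _ => (hX01 i ω j).2
      _ = n := by simp
  -- Chernoff bound per coordinate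
  have hcher : ∀ j, (μ {ω | t ≤ S j ω}).toReal
      ≤ Real.exp (-t) * Real.exp ((Real.exp 1 - 1) * M) := by
    intro j
    have h1 := measure_ge_le_exp_mul_mgf (μ := μ) (X := S j) t zero_le_one (hSint j)
    rw [neg_one_mul] at h1
    refine h1.trans ?_
    have hmgfS : mgf (S j) μ 1 = ∏ i, mgf (fun ω => X i ω j) μ 1 := by
      have h2 := (hind_j j).mgf_sum (t := 1) (fun i => hXmeas i j) Finset.univ
      rw [← h2]
      congr 1
      ext ω
      simp [hS]
    have hprod : mgf (S j) μ 1 ≤ Real.exp ((Real.exp 1 - 1) * M) := by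
      rw [hmgfS]
      calc ∏ i, mgf (fun ω => X i ω j) μ 1
          ≤ ∏ i, Real.exp ((Real.exp 1 - 1) * p i j) :=
            Finset.prod_le_prod (fun i _ => mgf_nonneg) (fun i _ => hmgf_i i j)
        _ = Real.exp (∑ i, (Real.exp 1 - 1) * p i j) := (Real.exp_sum _ _).symm
        _ ≤ Real.exp ((Real.exp 1 - 1) * M) := by
            rw [Real.exp_le_exp, ← Finset.mul_sum]
            have he1 : (0:ℝ) ≤ Real.exp 1 - 1 := by
              have := Real.one_le_exp (zero_le_one (α := ℝ))
              linarith
            exact mul_le_mul_of_nonneg_left (hsumpj j) he1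
    exact mul_le_mul_of_nonneg_left hprod (Real.exp_pos _).le
  -- combine via union bound
  set E := {ω | 3 * Real.log (1 + d) / n + 7 * ρ
        ≤ ⨆ j : Fin d, (1 / (n : ℝ)) * ∑ i, X i ω j} with hE
  have hmain : (μ E).toReal ≤ (d:ℝ) * (Real.exp (-t) * Real.exp ((Real.exp 1 - 1) * M)) := by
    have hU : μ E ≤ ∑ j : Fin d, μ {ω | t ≤ S j ω} :=
      (measure_mono hsub).trans (measure_iUnion_fintype_le _ _)
    have hfin : (∑ j : Fin d, μ {ω | t ≤ S j ω}) ≠ ⊤ :=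
      (ENNReal.sum_lt_top.2 fun j _ => measure_lt_top μ _).ne
    calc (μ E).toReal ≤ (∑ j : Fin d, μ {ω | t ≤ S j ω}).toReal :=
          ENNReal.toReal_mono hfin hU
      _ = ∑ j : Fin d, (μ {ω | t ≤ S j ω}).toReal :=
          ENNReal.toReal_sum fun j _ => measure_ne_top μ _
      _ ≤ ∑ _j : Fin d, Real.exp (-t) * Real.exp ((Real.exp 1 - 1) * M) :=
          Finset.sum_le_sum fun j _ => hcher j
      _ = (d:ℝ) * (Real.exp (-t) * Real.exp ((Real.exp 1 - 1) * M)) := by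
          simp [Finset.sum_const, mul_comm]
  -- final numeric simplification
  have hfinal : (d:ℝ) * (Real.exp (-t) * Real.exp ((Real.exp 1 - 1) * M))
      ≤ 2 * Real.exp (-M) := by
    have hD : (1:ℝ) ≤ d := by exact_mod_cast hd
    have he3 : Real.exp 1 < 3 := lt_trans Real.exp_one_lt_d9 (by norm_num)
    have hsplit : Real.exp (-t) * Real.exp ((Real.exp 1 - 1) * M)
        = Real.exp (-(3 * L)) * Real.exp (-((8 - Real.exp 1) * M)) := by
      rw [← Real.exp_add, ← Real.exp_add]
      congr 1
      rw [ht]; ring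
    have hexp3L : Real.exp (3 * L) = (1 + (d:ℝ)) ^ 3 := by
      rw [show (3:ℝ) * L = ((3:ℕ):ℝ) * L by norm_num, Real.exp_nat_mul,
        Real.exp_log (by positivity)]
    have hA : (d:ℝ) * Real.exp (-(3 * L)) ≤ 1 := by
      have hdle : (d:ℝ) ≤ Real.exp (3 * L) := by
        rw [hexp3L]
        have hcube : (1 + (d:ℝ)) ^ 3 = 1 + 3*(d:ℝ) + 3*(d:ℝ)^2 + (d:ℝ)^3 := by ring
        nlinarith [sq_nonneg (d:ℝ), pow_nonneg (le_trans zero_le_one hD) 3]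
      calc (d:ℝ) * Real.exp (-(3 * L))
          ≤ Real.exp (3 * L) * Real.exp (-(3 * L)) :=
            mul_le_mul_of_nonneg_right hdle (Real.exp_pos _).le
        _ = 1 := by rw [← Real.exp_add]; simp
    have hB : Real.exp (-((8 - Real.exp 1) * M)) ≤ Real.exp (-M) := by
      rw [Real.exp_le_exp]
      nlinarith
    calc (d:ℝ) * (Real.exp (-t) * Real.exp ((Real.exp 1 - 1) * M))
        = ((d:ℝ) * Real.exp (-(3 * L))) * Real.exp (-((8 - Real.exp 1) * M)) := by
          rw [hsplit]; ring
      _ ≤ 1 * Real.exp (-M) :=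
          mul_le_mul hA hB (Real.exp_pos _).le zero_le_one
      _ ≤ 2 * Real.exp (-M) := by
          have := Real.exp_pos (-M); linarith
  calc μ E = ENNReal.ofReal ((μ E).toReal) := (ENNReal.ofReal_toReal (measure_ne_top μ _)).symm
    _ ≤ ENNReal.ofReal (2 * Real.exp (-(n * ρ))) :=
        ENNReal.ofReal_le_ofReal (le_trans hmain (by rw [← hM]; exact hfinal))
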